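/- (Efficiency of the Shapley value.) For every finite set D and every function v : Finset α → ℝ with v(∅) = 0, the Shapley values of the elements of D sum to the total value: Σ_{f ∈ D} Shapley(D,v,f) = v(D). -/

import Mathlib

open scoped BigOperators

variable {α : Type*} [DecidableEq α]

/-- The Shapley value of `f` in the cooperative game `v` over the set of players `D`. -/
noncomputable def Shapley (D : Finset α) (v : Finset α → ℝ) (f : α) : ℝ :=
  ∑ B ∈ (D \ {f}).powerset,
    ((B.card.factorial * (D.card - B.card - 1).factorial : ℕ) : ℝ) / (D.card.factorial : ℝ) *
      (v (B ∪ {f}) - v B)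

/-- Efficiency of the Shapley value: if `v ∅ = 0`, the Shapley values of the
elements of `D` sum to the total value `v D`. -/
theorem shapley_efficiency (D : Finset α) (v : Finset α → ℝ) (h0 : v ∅ = 0) :
    ∑ f ∈ D, Shapley D v f = v D := by
  classical
  rcases D.eq_empty_or_nonempty with rfl | hD
  · simpa using h0.symm
  have hn0 : 0 < D.card := Finset.card_pos.2 hD
  set w : ℕ → ℝ := fun k =>
    ((k.factorial * (D.card - k - 1).factorial : ℕ) : ℝ) / (D.card.factorial : ℝ) with hw
  have expand : ∑ f ∈ D, Shapley D v f
      = (∑ f ∈ D, ∑ B ∈ (D \ {f}).powerset, w B.card * v (B ∪ {f}))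
        - (∑ f ∈ D, ∑ B ∈ (D \ {f}).powerset, w B.card * v B) := by
    rw [← Finset.sum_sub_distrib]
    refine Finset.sum_congr rfl fun f hf => ?_
    rw [Shapley, ← Finset.sum_sub_distrib]
    exact Finset.sum_congr rfl fun B hB => by simp [hw]; ring
  have hP : (∑ f ∈ D, ∑ B ∈ (D \ {f}).powerset, w B.card * v (B ∪ {f}))
      = ∑ S ∈ D.powerset, (S.card : ℝ) * w (S.card - 1) * v S := by
    have rhs : ∀ S ∈ D.powerset, (S.card : ℝ) * w (S.card - 1) * v S
        = ∑ _f ∈ S, w (S.card - 1) * v S := by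
      intro S _
      rw [Finset.sum_const, nsmul_eq_mul, mul_assoc]
    rw [Finset.sum_congr rfl rhs, Finset.sum_sigma', Finset.sum_sigma']
    refine Finset.sum_nbij' (i := fun p => ⟨insert p.1 p.2, p.1⟩)
      (j := fun p => ⟨p.2, p.1.erase p.2⟩) ?_ ?_ ?_ ?_ ?_
    · rintro ⟨f, B⟩ hp
      simp only [Finset.mem_sigma, Finset.mem_powerset] at hp ⊢
      exact ⟨Finset.insert_subset hp.1 ((Finset.subset_sdiff.1 hp.2).1),
        Finset.mem_insert_self _ _⟩
    · rintro ⟨S, f⟩ hp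
      simp only [Finset.mem_sigma, Finset.mem_powerset] at hp ⊢
      refine ⟨hp.1 hp.2, Finset.subset_sdiff.2 ⟨(Finset.erase_subset _ _).trans hp.1, ?_⟩⟩
      simp [Finset.disjoint_singleton_right]
    · rintro ⟨f, B⟩ hp
      simp only [Finset.mem_sigma, Finset.mem_powerset] at hp
      have hfB : f ∉ B := by
        intro h
        exact (Finset.mem_sdiff.1 (hp.2 h)).2 (Finset.mem_singleton_self f)
      simp [Finset.erase_insert hfB]
    · rintro ⟨S, f⟩ hp
      simp only [Finset.mem_sigma, Finset.mem_powerset] at hp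
      simp [Finset.insert_erase hp.2]
    · rintro ⟨f, B⟩ hp
      simp only [Finset.mem_sigma, Finset.mem_powerset] at hp
      have hfB : f ∉ B := by
        intro h
        exact (Finset.mem_sdiff.1 (hp.2 h)).2 (Finset.mem_singleton_self f)
      have hu : B ∪ {f} = insert f B := by
        rw [Finset.union_comm, ← Finset.insert_eq]
      simp [hu, Finset.card_insert_of_notMem hfB]
  have hN : (∑ f ∈ D, ∑ B ∈ (D \ {f}).powerset, w B.card * v B)
      = ∑ S ∈ D.powerset, ((D.card - S.card : ℕ) : ℝ) * w S.card * v S := by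
    have rhs : ∀ S ∈ D.powerset, ((D.card - S.card : ℕ) : ℝ) * w S.card * v S
        = ∑ _f ∈ D \ S, w S.card * v S := by
      intro S hS
      rw [Finset.sum_const, nsmul_eq_mul, mul_assoc,
        Finset.card_sdiff_of_subset (Finset.mem_powerset.1 hS)]
    rw [Finset.sum_congr rfl rhs, Finset.sum_sigma', Finset.sum_sigma']
    refine Finset.sum_nbij' (i := fun p => ⟨p.2, p.1⟩)
      (j := fun p => ⟨p.2, p.1⟩) ?_ ?_ ?_ ?_ ?_
    · rintro ⟨f, B⟩ hp
      simp only [Finset.mem_sigma, Finset.mem_powerset] at hp ⊢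
      have h2 := Finset.subset_sdiff.1 hp.2
      refine ⟨h2.1, Finset.mem_sdiff.2 ⟨hp.1, ?_⟩⟩
      intro hfB
      exact (Finset.mem_sdiff.1 (hp.2 hfB)).2 (Finset.mem_singleton_self f)
    · rintro ⟨S, f⟩ hp
      simp only [Finset.mem_sigma, Finset.mem_powerset, Finset.mem_sdiff] at hp ⊢
      exact ⟨hp.2.1, Finset.subset_sdiff.2 ⟨hp.1, by
        simp [Finset.disjoint_singleton_right, hp.2.2]⟩⟩
    · rintro ⟨f, B⟩ _; rfl
    · rintro ⟨S, f⟩ _; rfl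
    · rintro ⟨f, B⟩ _; rfl
  rw [expand, hP, hN, ← Finset.sum_sub_distrib]
  rw [Finset.sum_eq_single_of_mem D (Finset.mem_powerset_self D)]
  · have h1 : (D.card : ℝ) * ((D.card - 1).factorial : ℝ) = (D.card.factorial : ℝ) := by
      exact_mod_cast congrArg (Nat.cast : ℕ → ℝ) (Nat.mul_factorial_pred hn0.ne')
    have hfac : (D.card.factorial : ℝ) ≠ 0 := Nat.cast_ne_zero.2 D.card.factorial_ne_zero
    have he : D.card - (D.card - 1) - 1 = 0 := by omega
    simp only [hw, Nat.sub_self, Nat.cast_zero, zero_mul, sub_zero, he,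
      Nat.factorial_zero, mul_one]
    field_simp
    linear_combination v D * h1
  · intro S hS hSne
    rcases S.eq_empty_or_nonempty with rfl | hSne'
    · simp [h0]
    · have hs0 : 0 < S.card := Finset.card_pos.2 hSne'
      have hslt : S.card < D.card := Finset.card_lt_card
        (Finset.ssubset_iff_subset_ne.2 ⟨Finset.mem_powerset.1 hS, hSne⟩)
      set s := S.card with hs
      have key : (s : ℝ) * w (s - 1) = ((D.card - s : ℕ) : ℝ) * w s := by
        have e1 : D.card - (s - 1) - 1 = D.card - s := by omega
        have e2 : (D.card - s) - 1 = D.card - s - 1 := by omega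
        have h1 : (s : ℝ) * ((s - 1).factorial : ℝ) = (s.factorial : ℝ) := by
          exact_mod_cast congrArg (Nat.cast : ℕ → ℝ) (Nat.mul_factorial_pred hs0.ne')
        have h2 : ((D.card - s : ℕ) : ℝ) * ((D.card - s - 1).factorial : ℝ)
            = ((D.card - s).factorial : ℝ) := by
          have h3 := Nat.mul_factorial_pred (n := D.card - s) (by omega)
          rw [e2] at h3
          exact_mod_cast congrArg (Nat.cast : ℕ → ℝ) h3
        have hfac : (D.card.factorial : ℝ) ≠ 0 := Nat.cast_ne_zero.2 D.card.factorial_ne_zero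
        simp only [hw, e1]
        push_cast
        field_simp
        nlinarith [h1, h2]
      rw [← key]
      ring
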